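/- Let μ₁,₁ⁿ (n > 3) be the complex algebra with basis e₁,…,eₙ and only nonzero products eᵢeⱼ = e_{i+j} for i+j ≤ n−1. A linear map Δ on μ₁,₁ⁿ is a local derivation if and only if Δ(e₁) ∈ span{e₁,…,eₙ}, Δ(eᵢ) ∈ span{eᵢ,…,e_{n−1}} for 2 ≤ i ≤ n−1, and Δ(eₙ) ∈ span{e_{n−1}, eₙ}. -/

import Mathlib

/-- basis vectors -/
noncomputable def e (n : ℕ) (i : Fin n) : Fin n → ℂ := Pi.single i 1

/-- product of the null-filiform algebra μ₀ⁿ (0-based indices: index a ↔ e_{a+1}) -/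
noncomputable def mul0 (n : ℕ) (x y : Fin n → ℂ) : Fin n → ℂ :=
  fun k => ∑ i : Fin n, ∑ j : Fin n,
    if (i : ℕ) + (j : ℕ) + 1 = (k : ℕ) then x i * y j else 0

def IsDer {n : ℕ} (μ : (Fin n → ℂ) → (Fin n → ℂ) → Fin n → ℂ)
    (D : (Fin n → ℂ) →ₗ[ℂ] (Fin n → ℂ)) : Prop :=
  ∀ x y, D (μ x y) = μ (D x) y + μ x (D y)

def IsLocDer {n : ℕ} (μ : (Fin n → ℂ) → (Fin n → ℂ) → Fin n → ℂ)
    (Δ : (Fin n → ℂ) →ₗ[ℂ] (Fin n → ℂ)) : Prop :=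
  ∀ x, ∃ D, IsDer μ D ∧ Δ x = D x

/-- the submodule of derivations, given bilinearity of μ -/
noncomputable def derSubmodule (n : ℕ) (μ : (Fin n → ℂ) → (Fin n → ℂ) → Fin n → ℂ)
    (hal : ∀ x y z, μ (x + y) z = μ x z + μ y z)
    (har : ∀ x y z, μ x (y + z) = μ x y + μ x z)
    (hsl : ∀ (c : ℂ) x y, μ (c • x) y = c • μ x y)
    (hsr : ∀ (c : ℂ) x y, μ x (c • y) = c • μ x y) :
    Submodule ℂ ((Fin n → ℂ) →ₗ[ℂ] (Fin n → ℂ)) where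
  carrier := {D | IsDer μ D}
  zero_mem' := by
    intro x y
    have h1 : μ 0 y = 0 := by simpa using hsl 0 0 y
    have h2 : μ x 0 = 0 := by simpa using hsr 0 x 0
    simp [h1, h2]
  add_mem' := by
    intro D1 D2 h1 h2 x y
    simp only [LinearMap.add_apply, h1 x y, h2 x y, hal, har]
    abel
  smul_mem' := by
    intro c D hD x y
    simp only [LinearMap.smul_apply, hD x y, smul_add, hsl, hsr]

/-- the submodule of local derivations, given bilinearity of μ -/
noncomputable def locDerSubmodule (n : ℕ) (μ : (Fin n → ℂ) → (Fin n → ℂ) → Fin n → ℂ)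
    (hal : ∀ x y z, μ (x + y) z = μ x z + μ y z)
    (har : ∀ x y z, μ x (y + z) = μ x y + μ x z)
    (hsl : ∀ (c : ℂ) x y, μ (c • x) y = c • μ x y)
    (hsr : ∀ (c : ℂ) x y, μ x (c • y) = c • μ x y) :
    Submodule ℂ ((Fin n → ℂ) →ₗ[ℂ] (Fin n → ℂ)) where
  carrier := {Δ | IsLocDer μ Δ}
  zero_mem' := by
    intro x
    exact ⟨0, (derSubmodule n μ hal har hsl hsr).zero_mem, rfl⟩
  add_mem' := by
    intro D1 D2 h1 h2 x
    obtain ⟨E1, hE1, he1⟩ := h1 x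
    obtain ⟨E2, hE2, he2⟩ := h2 x
    exact ⟨E1 + E2, (derSubmodule n μ hal har hsl hsr).add_mem hE1 hE2, by
      simp [he1, he2]⟩
  smul_mem' := by
    intro c Δ hΔ x
    obtain ⟨E, hE, he⟩ := hΔ x
    exact ⟨c • E, (derSubmodule n μ hal har hsl hsr).smul_mem c hE, by simp [he]⟩

lemma mul0_add_left (n : ℕ) (x y z : Fin n → ℂ) :
    mul0 n (x + y) z = mul0 n x z + mul0 n y z := by
  funext k
  simp only [mul0, Pi.add_apply]
  rw [← Finset.sum_add_distrib]
  refine Finset.sum_congr rfl fun i _ => ?_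
  rw [← Finset.sum_add_distrib]
  refine Finset.sum_congr rfl fun j _ => ?_
  split <;> ring

lemma mul0_add_right (n : ℕ) (x y z : Fin n → ℂ) :
    mul0 n x (y + z) = mul0 n x y + mul0 n x z := by
  funext k
  simp only [mul0, Pi.add_apply]
  rw [← Finset.sum_add_distrib]
  refine Finset.sum_congr rfl fun i _ => ?_
  rw [← Finset.sum_add_distrib]
  refine Finset.sum_congr rfl fun j _ => ?_
  split <;> ring

lemma mul0_smul_left (n : ℕ) (c : ℂ) (x y : Fin n → ℂ) :
    mul0 n (c • x) y = c • mul0 n x y := by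
  funext k
  simp only [mul0, Pi.smul_apply, smul_eq_mul, Finset.mul_sum]
  refine Finset.sum_congr rfl fun i _ => ?_
  refine Finset.sum_congr rfl fun j _ => ?_
  split <;> ring

lemma mul0_smul_right (n : ℕ) (c : ℂ) (x y : Fin n → ℂ) :
    mul0 n x (c • y) = c • mul0 n x y := by
  funext k
  simp only [mul0, Pi.smul_apply, smul_eq_mul, Finset.mul_sum]
  refine Finset.sum_congr rfl fun i _ => ?_
  refine Finset.sum_congr rfl fun j _ => ?_
  split <;> ring


noncomputable def mul11 (n : ℕ) (x y : Fin n → ℂ) : Fin n → ℂ :=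
  fun k => ∑ i : Fin n, ∑ j : Fin n,
    if (i : ℕ) + (j : ℕ) + 1 = (k : ℕ) ∧ (k : ℕ) + 2 ≤ n then x i * y j else 0

lemma mul11_add_left (n : ℕ) (x y z : Fin n → ℂ) :
    mul11 n (x + y) z = mul11 n x z + mul11 n y z := by
  funext k
  simp only [mul11, Pi.add_apply]
  rw [← Finset.sum_add_distrib]
  refine Finset.sum_congr rfl fun i _ => ?_
  rw [← Finset.sum_add_distrib]
  refine Finset.sum_congr rfl fun j _ => ?_
  split <;> ring

lemma mul11_add_right (n : ℕ) (x y z : Fin n → ℂ) :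
    mul11 n x (y + z) = mul11 n x y + mul11 n x z := by
  funext k
  simp only [mul11, Pi.add_apply]
  rw [← Finset.sum_add_distrib]
  refine Finset.sum_congr rfl fun i _ => ?_
  rw [← Finset.sum_add_distrib]
  refine Finset.sum_congr rfl fun j _ => ?_
  split <;> ring

lemma mul11_smul_left (n : ℕ) (c : ℂ) (x y : Fin n → ℂ) :
    mul11 n (c • x) y = c • mul11 n x y := by
  funext k
  simp only [mul11, Pi.smul_apply, smul_eq_mul, Finset.mul_sum]
  refine Finset.sum_congr rfl fun i _ => ?_
  refine Finset.sum_congr rfl fun j _ => ?_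
  split <;> ring

lemma mul11_smul_right (n : ℕ) (c : ℂ) (x y : Fin n → ℂ) :
    mul11 n x (c • y) = c • mul11 n x y := by
  funext k
  simp only [mul11, Pi.smul_apply, smul_eq_mul, Finset.mul_sum]
  refine Finset.sum_congr rfl fun i _ => ?_
  refine Finset.sum_congr rfl fun j _ => ?_
  split <;> ring


lemma mul11_single_left (n : ℕ) (a : Fin n) (c : ℂ) (y : Fin n → ℂ) (k : Fin n) :
    mul11 n (Pi.single a c) y k =
      if h : (a : ℕ) + 1 ≤ (k : ℕ) ∧ (k : ℕ) + 2 ≤ n then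
        c * y ⟨(k : ℕ) - (a : ℕ) - 1, by omega⟩ else 0 := by
  unfold mul11
  rw [Finset.sum_eq_single a]
  · by_cases h : (a : ℕ) + 1 ≤ (k : ℕ) ∧ (k : ℕ) + 2 ≤ n
    · rw [dif_pos h, Finset.sum_eq_single (⟨(k : ℕ) - (a : ℕ) - 1, by omega⟩ : Fin n)]
      · rw [if_pos ⟨by simp; omega, by omega⟩, Pi.single_eq_same]
      · intro j _ hj
        rw [if_neg]
        rintro ⟨h1, -⟩
        exact hj (Fin.ext (by simp at h1 ⊢; omega))
      · intro h'; exact absurd (Finset.mem_univ _) h'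
    · rw [dif_neg h]
      refine Finset.sum_eq_zero fun j _ => ?_
      rw [if_neg]
      rintro ⟨h1, h2⟩
      exact h ⟨by omega, h2⟩
  · intro i _ hi
    refine Finset.sum_eq_zero fun j _ => ?_
    rw [Pi.single_eq_of_ne hi, zero_mul, ite_self]
  · intro h'; exact absurd (Finset.mem_univ _) h'

lemma mul11_single_right (n : ℕ) (b : Fin n) (c : ℂ) (x : Fin n → ℂ) (k : Fin n) :
    mul11 n x (Pi.single b c) k =
      if h : (b : ℕ) + 1 ≤ (k : ℕ) ∧ (k : ℕ) + 2 ≤ n then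
        x ⟨(k : ℕ) - (b : ℕ) - 1, by omega⟩ * c else 0 := by
  unfold mul11
  have : ∀ i : Fin n, (∑ j : Fin n,
      if (i : ℕ) + (j : ℕ) + 1 = (k : ℕ) ∧ (k : ℕ) + 2 ≤ n then x i * (Pi.single b c : Fin n → ℂ) j else 0)
      = if (i : ℕ) + (b : ℕ) + 1 = (k : ℕ) ∧ (k : ℕ) + 2 ≤ n then x i * c else 0 := by
    intro i
    rw [Finset.sum_eq_single b]
    · rw [Pi.single_eq_same]
    · intro j _ hj
      rw [Pi.single_eq_of_ne hj, mul_zero, ite_self]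
    · intro h'; exact absurd (Finset.mem_univ _) h'
  simp only [this]
  by_cases h : (b : ℕ) + 1 ≤ (k : ℕ) ∧ (k : ℕ) + 2 ≤ n
  · rw [dif_pos h, Finset.sum_eq_single (⟨(k : ℕ) - (b : ℕ) - 1, by omega⟩ : Fin n)]
    · rw [if_pos ⟨by simp; omega, by omega⟩]
    · intro i _ hi
      rw [if_neg]
      rintro ⟨h1, -⟩
      exact hi (Fin.ext (by simp at h1 ⊢; omega))
    · intro h'; exact absurd (Finset.mem_univ _) h'
  · rw [dif_neg h]
    refine Finset.sum_eq_zero fun i _ => ?_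
    rw [if_neg]
    rintro ⟨h1, h2⟩
    exact h ⟨by omega, h2⟩

lemma mul11_single_single (n : ℕ) (a b : Fin n) (c d : ℂ) :
    mul11 n (Pi.single a c) (Pi.single b d) =
      if h : (a : ℕ) + (b : ℕ) + 3 ≤ n then
        Pi.single (⟨(a : ℕ) + (b : ℕ) + 1, by omega⟩ : Fin n) (c * d) else 0 := by
  funext k
  rw [mul11_single_left]
  by_cases h : (a : ℕ) + (b : ℕ) + 3 ≤ n
  · rw [dif_pos h]
    by_cases hk : (k : ℕ) = (a : ℕ) + (b : ℕ) + 1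
    · rw [dif_pos ⟨by omega, by omega⟩]
      have hb : (⟨(k : ℕ) - (a : ℕ) - 1, by omega⟩ : Fin n) = b := Fin.ext (by simp; omega)
      rw [hb, Pi.single_eq_same, show k = (⟨(a : ℕ) + (b : ℕ) + 1, by omega⟩ : Fin n) from
        Fin.ext (by simpa using hk), Pi.single_eq_same]
    · rw [Pi.single_eq_of_ne (by intro hh; apply hk; rw [hh]), ]
      by_cases h2 : (a : ℕ) + 1 ≤ (k : ℕ) ∧ (k : ℕ) + 2 ≤ n
      · rw [dif_pos h2, Pi.single_eq_of_ne, mul_zero]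
        intro hh
        apply hk
        have := congrArg (Fin.val) hh
        simp at this
        omega
      · rw [dif_neg h2]
  · rw [dif_neg h]
    by_cases h2 : (a : ℕ) + 1 ≤ (k : ℕ) ∧ (k : ℕ) + 2 ≤ n
    · rw [dif_pos h2, Pi.single_eq_of_ne, mul_zero, Pi.zero_apply]
      intro hh
      have := congrArg (Fin.val) hh
      simp at this
      omega
    · rw [dif_neg h2, Pi.zero_apply]

lemma mul11_zero_left (n : ℕ) (y : Fin n → ℂ) : mul11 n 0 y = 0 := by
  simpa using mul11_smul_left n 0 0 y

lemma mul11_zero_right (n : ℕ) (x : Fin n → ℂ) : mul11 n x 0 = 0 := by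
  simpa using mul11_smul_right n 0 x 0

lemma pi_decomp (n : ℕ) (x : Fin n → ℂ) : x = ∑ a : Fin n, x a • e n a := by
  funext k
  simp [e, Finset.sum_apply, Pi.single_apply]

/-- mul11 as a bilinear map -/
noncomputable def M11 (n : ℕ) : (Fin n → ℂ) →ₗ[ℂ] (Fin n → ℂ) →ₗ[ℂ] (Fin n → ℂ) :=
  LinearMap.mk₂ ℂ (mul11 n) (mul11_add_left n) (mul11_smul_left n)
    (mul11_add_right n) (mul11_smul_right n)

lemma isDer_of_basis (n : ℕ) (D : (Fin n → ℂ) →ₗ[ℂ] (Fin n → ℂ))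
    (h : ∀ a b : Fin n, D (mul11 n (e n a) (e n b)) =
      mul11 n (D (e n a)) (e n b) + mul11 n (e n a) (D (e n b))) :
    IsDer (mul11 n) D := by
  intro x y
  have key : ∀ u v : Fin n → ℂ, mul11 n u v = M11 n u v := fun _ _ => rfl
  have h' : ∀ a b : Fin n, D (M11 n (e n a) (e n b)) =
      M11 n (D (e n a)) (e n b) + M11 n (e n a) (D (e n b)) := by
    intro a b; rw [← key, ← key, ← key]; exact h a b
  simp only [key]
  rw [pi_decomp n x, pi_decomp n y]
  simp only [map_sum, map_smul, LinearMap.sum_apply, LinearMap.smul_apply, smul_add,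
    Finset.smul_sum]
  rw [← Finset.sum_add_distrib]
  refine Finset.sum_congr rfl fun b _ => ?_
  rw [← Finset.sum_add_distrib]
  refine Finset.sum_congr rfl fun a _ => ?_
  rw [h' a b, smul_add, smul_add]

/-- the "shift by d with weights" derivation family -/
noncomputable def Amap (n d : ℕ) : (Fin n → ℂ) →ₗ[ℂ] (Fin n → ℂ) where
  toFun x := fun k => if h : (k : ℕ) + 2 ≤ n ∧ d ≤ (k : ℕ) then
    (((k : ℕ) - d + 1 : ℕ) : ℂ) * x ⟨(k : ℕ) - d, by omega⟩ else 0
  map_add' x y := by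
    funext k
    simp only [Pi.add_apply]
    split_ifs with h
    · simp [mul_add]
    · simp
  map_smul' c x := by
    funext k
    simp only [Pi.smul_apply, smul_eq_mul, RingHom.id_apply]
    split_ifs with h
    · ring
    · simp

lemma Amap_apply (n d : ℕ) (x : Fin n → ℂ) (k : Fin n) :
    Amap n d x k = if h : (k : ℕ) + 2 ≤ n ∧ d ≤ (k : ℕ) then
      (((k : ℕ) - d + 1 : ℕ) : ℂ) * x ⟨(k : ℕ) - d, by omega⟩ else 0 := rfl

lemma Amap_single_apply (n d : ℕ) (a : Fin n) (c : ℂ) (k : Fin n) :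
    Amap n d (Pi.single a c) k =
      if (k : ℕ) = (a : ℕ) + d ∧ (k : ℕ) + 2 ≤ n then (((a : ℕ) + 1 : ℕ) : ℂ) * c else 0 := by
  rw [Amap_apply]
  split_ifs with h1 h2 h2
  · congr 2
    · omega
    · rw [show (⟨(k : ℕ) - d, by omega⟩ : Fin n) = a from Fin.ext (by simp; omega),
        Pi.single_eq_same]
  · rw [Pi.single_eq_of_ne (by simp [Fin.ext_iff]; omega), mul_zero]
  · omega
  · rfl

lemma mul11_single_single_apply (n : ℕ) (a b : Fin n) (c d : ℂ) (k : Fin n) :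
    mul11 n (Pi.single a c) (Pi.single b d) k =
      if (k : ℕ) = (a : ℕ) + (b : ℕ) + 1 ∧ (k : ℕ) + 2 ≤ n then c * d else 0 := by
  rw [mul11_single_left]
  split_ifs with h1 h2 h2
  · rw [show (⟨(k : ℕ) - (a : ℕ) - 1, by omega⟩ : Fin n) = b from Fin.ext (by simp; omega),
      Pi.single_eq_same]
  · rw [Pi.single_eq_of_ne (by simp [Fin.ext_iff]; omega), mul_zero]
  · omega
  · rfl

lemma isDer_Amap (n d : ℕ) : IsDer (mul11 n) (Amap n d) := by
  apply isDer_of_basis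
  intro a b
  simp only [e]
  funext k
  rw [Pi.add_apply, Amap_apply, mul11_single_right, mul11_single_left]
  simp only [mul11_single_single_apply, Amap_single_apply]
  split_ifs <;>
    first
      | (exfalso; omega)
      | ring1
      | (rw [show (k : ℕ) - d + 1 = ((a : ℕ) + 1) + ((b : ℕ) + 1) from by omega]
         push_cast
         ring)

lemma single_congr (n : ℕ) (i i' : Fin n) (c c' : ℂ) (h : (i : ℕ) = (i' : ℕ))
    (hc : c = c') : (Pi.single i c : Fin n → ℂ) = Pi.single i' c' := by
  have : i = i' := Fin.ext h
  rw [this, hc]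

/-- matrix unit: x ↦ x_A • e_K -/
noncomputable def Emap (n : ℕ) (K A : Fin n) : (Fin n → ℂ) →ₗ[ℂ] (Fin n → ℂ) where
  toFun x := x A • e n K
  map_add' x y := by simp [add_smul]
  map_smul' c x := by simp [mul_smul]

lemma Emap_apply (n : ℕ) (K A : Fin n) (x : Fin n → ℂ) : Emap n K A x = x A • e n K := rfl

lemma isDer_Emap_special (n : ℕ) (hn : 3 < n) (K A : Fin n)
    (hA : (A : ℕ) = 0 ∨ (A : ℕ) = n - 1) (hK : n - 2 ≤ (K : ℕ)) :
    IsDer (mul11 n) (Emap n K A) := by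
  apply isDer_of_basis
  intro a b
  rw [Emap_apply, Emap_apply, Emap_apply]
  simp only [e]
  rw [mul11_single_single_apply, if_neg (by omega), zero_smul,
    mul11_smul_left, mul11_smul_right, mul11_single_single, mul11_single_single,
    dif_neg (by omega), dif_neg (by omega)]
  simp

lemma der_lower (n : ℕ) (hn : 3 < n) (D : (Fin n → ℂ) →ₗ[ℂ] (Fin n → ℂ))
    (hD : IsDer (mul11 n) D) :
    ∀ a : Fin n, 1 ≤ (a : ℕ) → (a : ℕ) ≤ n - 2 → ∀ k : Fin n,
      ((k : ℕ) < (a : ℕ) ∨ (k : ℕ) = n - 1) → D (e n a) k = 0 := by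
  suffices H : ∀ m : ℕ, ∀ a : Fin n, (a : ℕ) = m → 1 ≤ m → m ≤ n - 2 → ∀ k : Fin n,
      ((k : ℕ) < m ∨ (k : ℕ) = n - 1) → D (e n a) k = 0 by
    exact fun a h1 h2 k hk => H (a : ℕ) a rfl h1 h2 k hk
  intro m
  induction m using Nat.strong_induction_on with
  | _ m IH =>
  intro a ham h1 h2 k hk
  have key : e n a = mul11 n (e n ⟨0, by omega⟩) (e n ⟨m - 1, by omega⟩) := by
    simp only [e]
    rw [mul11_single_single, dif_pos (by simp; omega)]
    exact single_congr n _ _ _ _ (by simp; omega) (by norm_num)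
  rw [key, hD]
  rw [Pi.add_apply]
  simp only [e]
  rw [mul11_single_right, mul11_single_left, dif_neg (by simp; omega)]
  rcases hk with hk | hk
  · by_cases hk0 : (k : ℕ) = 0
    · rw [dif_neg (by simp; omega)]
      simp
    · rw [dif_pos ⟨by simp; omega, by omega⟩]
      have hm2 : 2 ≤ m := by omega
      have hz : D (Pi.single (⟨m - 1, by omega⟩ : Fin n) (1 : ℂ))
          ⟨(k : ℕ) - ((⟨0, by omega⟩ : Fin n) : ℕ) - 1, by simp; omega⟩ = 0 :=
        IH (m - 1) (by omega) ⟨m - 1, by omega⟩ (by simp) (by omega) (by omega)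
          ⟨(k : ℕ) - ((⟨0, by omega⟩ : Fin n) : ℕ) - 1, by simp; omega⟩
          (Or.inl (by simp; omega))
      rw [hz]
      simp
  · rw [dif_neg (by omega)]
    simp

lemma der_top (n : ℕ) (hn : 3 < n) (D : (Fin n → ℂ) →ₗ[ℂ] (Fin n → ℂ))
    (hD : IsDer (mul11 n) D) :
    ∀ k : Fin n, (k : ℕ) < n - 2 → D (e n ⟨n - 1, Nat.sub_lt (by omega) Nat.one_pos⟩) k = 0 := by
  intro k hk
  have h0 : mul11 n (e n ⟨0, by omega⟩) (e n ⟨n - 1, by omega⟩) = 0 := by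
    simp only [e]
    rw [mul11_single_single, dif_neg (by simp; omega)]
  have h := hD (e n ⟨0, by omega⟩) (e n ⟨n - 1, by omega⟩)
  rw [h0, map_zero] at h
  have h2 := congrFun h.symm (⟨(k : ℕ) + 1, by omega⟩ : Fin n)
  rw [Pi.add_apply, Pi.zero_apply] at h2
  conv_lhs at h2 => rw [show (e n ⟨n - 1, by omega⟩ : Fin n → ℂ) = Pi.single ⟨n - 1, by omega⟩ 1 from rfl]
  rw [mul11_single_right, dif_neg (by simp; omega)] at h2
  conv_lhs at h2 => rw [show (e n ⟨0, by omega⟩ : Fin n → ℂ) = Pi.single ⟨0, by omega⟩ 1 from rfl]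
  rw [mul11_single_left, dif_pos ⟨by simp <;> omega, by simp <;> omega⟩] at h2
  rw [show (⟨((⟨(k : ℕ) + 1, by omega⟩ : Fin n) : ℕ) - ((⟨0, by omega⟩ : Fin n) : ℕ) - 1, by simp <;> omega⟩ : Fin n) = k
      from Fin.ext (by simp)] at h2
  simpa [e] using h2

/-- extension of x to ℕ by zero -/
noncomputable def xe (n : ℕ) (x : Fin n → ℂ) (j : ℕ) : ℂ :=
  if h : j < n then x ⟨j, h⟩ else 0

/-- recursive solution of the triangular convolution system -/
noncomputable def alf (n : ℕ) (x : Fin n → ℂ) (m : ℕ) (t : ℕ → ℂ) (d : ℕ) : ℂ :=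
  (t (m + d) - ∑ s ∈ (Finset.range d).attach,
      ((m + (s : ℕ) + 2 : ℕ) : ℂ) * xe n x (m + (s : ℕ) + 1) * alf n x m t (d - (s : ℕ) - 1))
    / (((m + 1 : ℕ) : ℂ) * xe n x m)
termination_by d
decreasing_by
  have := s.2
  simp only [Finset.mem_range] at this
  omega

lemma alf_spec (n : ℕ) (x : Fin n → ℂ) (m : ℕ) (t : ℕ → ℂ) (hx : xe n x m ≠ 0) (d : ℕ) :
    ∑ s ∈ Finset.range (d + 1),
      ((m + s + 1 : ℕ) : ℂ) * xe n x (m + s) * alf n x m t (d - s) = t (m + d) := by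
  have hm1 : ((m + 1 : ℕ) : ℂ) * xe n x m ≠ 0 :=
    mul_ne_zero (Nat.cast_ne_zero.mpr (Nat.succ_ne_zero m)) hx
  rw [Finset.sum_range_succ']
  have step : ∀ i ∈ Finset.range d,
      ((m + (i + 1) + 1 : ℕ) : ℂ) * xe n x (m + (i + 1)) * alf n x m t (d - (i + 1))
        = ((m + i + 2 : ℕ) : ℂ) * xe n x (m + i + 1) * alf n x m t (d - i - 1) := by
    intro i _
    rw [show m + (i + 1) + 1 = m + i + 2 from by omega,
      show m + (i + 1) = m + i + 1 from by omega,
      show d - (i + 1) = d - i - 1 from by omega]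
  rw [Finset.sum_congr rfl step]
  rw [show m + 0 + 1 = m + 1 from by omega, show m + 0 = m from by omega, Nat.sub_zero]
  conv_lhs => rw [alf]
  rw [Finset.sum_attach (Finset.range d)
    (fun s => ((m + s + 2 : ℕ) : ℂ) * xe n x (m + s + 1) * alf n x m t (d - s - 1))]
  field_simp
  push_cast at hm1
  ring

noncomputable def Dsolve (n : ℕ) (x : Fin n → ℂ) (m : ℕ) (t : ℕ → ℂ) :
    (Fin n → ℂ) →ₗ[ℂ] (Fin n → ℂ) :=
  ∑ d ∈ Finset.range (n - 1), alf n x m t d • Amap n d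

lemma isDer_Dsolve (n : ℕ) (x : Fin n → ℂ) (m : ℕ) (t : ℕ → ℂ) :
    IsDer (mul11 n) (Dsolve n x m t) := by
  have : Dsolve n x m t ∈ derSubmodule n (mul11 n) (mul11_add_left n) (mul11_add_right n)
      (mul11_smul_left n) (mul11_smul_right n) :=
    Submodule.sum_mem _ fun d _ => Submodule.smul_mem _ _ (isDer_Amap n d)
  exact this

lemma Dsolve_eq (n : ℕ) (hn : 3 < n) (x : Fin n → ℂ) (m : ℕ) (hmn : m ≤ n - 2)
    (hm0 : ∀ j, j < m → xe n x j = 0) (hxm : xe n x m ≠ 0) (t : ℕ → ℂ) (k : Fin n) :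
    Dsolve n x m t x k = if m ≤ (k : ℕ) ∧ (k : ℕ) + 2 ≤ n then t (k : ℕ) else 0 := by
  have happ : Dsolve n x m t x k
      = ∑ d ∈ Finset.range (n - 1), alf n x m t d * Amap n d x k := by
    simp [Dsolve, LinearMap.sum_apply, Finset.sum_apply, LinearMap.smul_apply,
      Pi.smul_apply, smul_eq_mul]
  rw [happ]
  by_cases hk2 : (k : ℕ) + 2 ≤ n
  · have step1 : ∀ d ∈ Finset.range (n - 1), alf n x m t d * Amap n d x k
        = if d ≤ (k : ℕ) then
            (((k : ℕ) - d + 1 : ℕ) : ℂ) * xe n x ((k : ℕ) - d) * alf n x m t d else 0 := by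
      intro d _
      rw [Amap_apply]
      by_cases hd : d ≤ (k : ℕ)
      · rw [dif_pos ⟨hk2, hd⟩, if_pos hd, xe, dif_pos (by omega)]
        ring
      · rw [dif_neg (by omega), if_neg hd, mul_zero]
    rw [Finset.sum_congr rfl step1]
    rw [← Finset.sum_subset (Finset.range_subset_range.mpr (show (k : ℕ) + 1 ≤ n - 1 by omega))
      (fun i _ hi => if_neg (by simp only [Finset.mem_range] at hi; omega))]
    have step2 : ∀ d ∈ Finset.range ((k : ℕ) + 1),
        (if d ≤ (k : ℕ) then
            (((k : ℕ) - d + 1 : ℕ) : ℂ) * xe n x ((k : ℕ) - d) * alf n x m t d else 0)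
          = (((k : ℕ) - d + 1 : ℕ) : ℂ) * xe n x ((k : ℕ) - d) * alf n x m t d := by
      intro d hd
      rw [if_pos (by simp only [Finset.mem_range] at hd; omega)]
    rw [Finset.sum_congr rfl step2]
    rw [← Finset.sum_range_reflect]
    have step3 : ∀ j ∈ Finset.range ((k : ℕ) + 1),
        (((k : ℕ) - ((k : ℕ) + 1 - 1 - j) + 1 : ℕ) : ℂ) * xe n x ((k : ℕ) - ((k : ℕ) + 1 - 1 - j))
            * alf n x m t ((k : ℕ) + 1 - 1 - j)
          = ((j + 1 : ℕ) : ℂ) * xe n x j * alf n x m t ((k : ℕ) - j) := by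
      intro j hj
      simp only [Finset.mem_range] at hj
      rw [show (k : ℕ) - ((k : ℕ) + 1 - 1 - j) + 1 = j + 1 from by omega,
        show (k : ℕ) - ((k : ℕ) + 1 - 1 - j) = j from by omega,
        show (k : ℕ) + 1 - 1 - j = (k : ℕ) - j from by omega]
    rw [Finset.sum_congr rfl step3]
    by_cases hmk : m ≤ (k : ℕ)
    · rw [if_pos ⟨hmk, hk2⟩]
      rw [← Finset.sum_subset
        (show Finset.Ico m ((k : ℕ) + 1) ⊆ Finset.range ((k : ℕ) + 1) from by
          rw [Finset.range_eq_Ico]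
          exact Finset.Ico_subset_Ico (Nat.zero_le m) le_rfl)
        (fun j _ hj => by
          have hjm : j < m := by
            simp only [Finset.mem_Ico, Finset.mem_range] at *
            omega
          rw [hm0 j hjm, mul_zero, zero_mul])]
      rw [Finset.sum_Ico_eq_sum_range]
      have step4 : ∀ s ∈ Finset.range ((k : ℕ) + 1 - m),
          ((m + s + 1 : ℕ) : ℂ) * xe n x (m + s) * alf n x m t ((k : ℕ) - (m + s))
            = ((m + s + 1 : ℕ) : ℂ) * xe n x (m + s) * alf n x m t ((k : ℕ) - m - s) := by
        intro s _
        rw [show (k : ℕ) - (m + s) = (k : ℕ) - m - s from by omega]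
      rw [Finset.sum_congr rfl step4, show (k : ℕ) + 1 - m = ((k : ℕ) - m) + 1 from by omega]
      rw [alf_spec n x m t hxm ((k : ℕ) - m), show m + ((k : ℕ) - m) = (k : ℕ) from by omega]
    · rw [if_neg (by tauto)]
      refine Finset.sum_eq_zero fun j hj => ?_
      simp only [Finset.mem_range] at hj
      rw [hm0 j (by omega), mul_zero, zero_mul]
  · rw [if_neg (by tauto)]
    refine Finset.sum_eq_zero fun d _ => ?_
    rw [Amap_apply, dif_neg (by tauto), mul_zero]

lemma emap_isLocDer (n : ℕ) (hn : 3 < n) (K A : Fin n) (hAK : (A : ℕ) ≤ (K : ℕ))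
    (hK : (K : ℕ) + 2 ≤ n) : IsLocDer (mul11 n) (Emap n K A) := by
  intro x
  by_cases hxa : x A = 0
  · refine ⟨0, ?_, by simp [Emap_apply, hxa]⟩
    exact (derSubmodule n (mul11 n) (mul11_add_left n) (mul11_add_right n)
      (mul11_smul_left n) (mul11_smul_right n)).zero_mem
  · have hex : ∃ j, xe n x j ≠ 0 := ⟨(A : ℕ), by
      rw [xe, dif_pos A.isLt]
      simpa using hxa⟩
    set m := Nat.find hex with hm
    have hxm : xe n x m ≠ 0 := Nat.find_spec hex
    have hmA : m ≤ (A : ℕ) := Nat.find_min' hex (by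
      rw [xe, dif_pos A.isLt]
      simpa using hxa)
    have hm0 : ∀ j, j < m → xe n x j = 0 := fun j hj => of_not_not (Nat.find_min hex hj)
    refine ⟨Dsolve n x m (fun j => if j = (K : ℕ) then x A else 0),
      isDer_Dsolve n x m _, ?_⟩
    funext k
    rw [Dsolve_eq n hn x m (by omega) hm0 hxm _ k, Emap_apply]
    simp only [Pi.smul_apply, smul_eq_mul, e, Pi.single_apply]
    by_cases hkK : k = K
    · subst hkK
      rw [if_pos (show m ≤ (k : ℕ) ∧ (k : ℕ) + 2 ≤ n from ⟨by omega, hK⟩)]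
      simp
    · rw [if_neg hkK, mul_zero]
      split_ifs with h1 h2
      · exact absurd (Fin.ext h2) hkK
      · rfl
      · rfl

lemma lin_decomp (n : ℕ) (Δ : (Fin n → ℂ) →ₗ[ℂ] (Fin n → ℂ)) :
    Δ = ∑ a : Fin n, ∑ k : Fin n, Δ (e n a) k • Emap n k a := by
  apply LinearMap.ext
  intro x
  conv_lhs => rw [pi_decomp n x]
  rw [map_sum]
  simp only [map_smul, LinearMap.sum_apply, LinearMap.smul_apply, Emap_apply]
  refine Finset.sum_congr rfl fun a _ => ?_
  conv_lhs => rw [pi_decomp n (Δ (e n a))]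
  rw [Finset.smul_sum]
  refine Finset.sum_congr rfl fun k _ => ?_
  rw [smul_smul, smul_smul, mul_comm]

theorem stmt16 (n : ℕ) (hn : 3 < n) (Δ : (Fin n → ℂ) →ₗ[ℂ] (Fin n → ℂ)) :
    IsLocDer (mul11 n) Δ ↔
      ((∀ a k : Fin n, 1 ≤ (a : ℕ) → (a : ℕ) ≤ n - 2 →
          ((k : ℕ) < (a : ℕ) ∨ (k : ℕ) = n - 1) → Δ (e n a) k = 0) ∧
       (∀ k : Fin n, (k : ℕ) < n - 2 → Δ (e n ⟨n - 1, by omega⟩) k = 0)) := by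
  constructor
  · intro hloc
    constructor
    · intro a k h1 h2 hk
      obtain ⟨D, hD, hDe⟩ := hloc (e n a)
      rw [hDe]
      exact der_lower n hn D hD a h1 h2 k hk
    · intro k hk
      obtain ⟨D, hD, hDe⟩ := hloc (e n ⟨n - 1, by omega⟩)
      rw [hDe]
      exact der_top n hn D hD k hk
  · rintro ⟨hmain, htop⟩
    have hmem : Δ ∈ locDerSubmodule n (mul11 n) (mul11_add_left n) (mul11_add_right n)
        (mul11_smul_left n) (mul11_smul_right n) := by
      rw [lin_decomp n Δ]
      refine Submodule.sum_mem _ fun a _ => Submodule.sum_mem _ fun k _ => ?_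
      by_cases hz : Δ (e n a) k = 0
      · rw [hz, zero_smul]
        exact Submodule.zero_mem _
      · refine Submodule.smul_mem _ _ ?_
        by_cases ha0 : (a : ℕ) = 0
        · by_cases hk2 : (k : ℕ) + 2 ≤ n
          · exact (emap_isLocDer n hn k a (by omega) hk2 :
              IsLocDer (mul11 n) (Emap n k a))
          · have hder : IsDer (mul11 n) (Emap n k a) :=
              isDer_Emap_special n hn k a (Or.inl ha0) (by have := k.isLt; omega)
            exact fun y => ⟨_, hder, rfl⟩
        · by_cases han : (a : ℕ) = n - 1
          · by_cases hk2 : n - 2 ≤ (k : ℕ)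
            · have hder : IsDer (mul11 n) (Emap n k a) :=
                isDer_Emap_special n hn k a (Or.inr han) hk2
              exact fun y => ⟨_, hder, rfl⟩
            · exfalso
              apply hz
              have ha' : a = ⟨n - 1, by omega⟩ := Fin.ext (by simp; omega)
              rw [ha']
              exact htop k (by omega)
          · by_cases hak : (a : ℕ) ≤ (k : ℕ) ∧ (k : ℕ) + 2 ≤ n
            · exact (emap_isLocDer n hn k a hak.1 hak.2 :
                IsLocDer (mul11 n) (Emap n k a))
            · exfalso
              apply hz
              exact hmain a k (by omega) (by omega) (by have := k.isLt; omega)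
    exact hmem
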